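/- If ξ is a random variable on {1,...,N} with Abelian distribution P_{α,N} (parameters N ≥ 1 an integer, α ∈ (0,1)), then its expectation equals N/(N-(N-1)α); equivalently, ∑_{L=1}^{N} L · C_{α,N} · binom(N,L) · (Lα/N)^{L-1} · (1 - Lα/N)^{N-L-1} = N/(N-(N-1)α). -/

import Mathlib

open Finset

lemma alt_pow_sum : ∀ i : ℕ, ∀ m : ℕ, i < m →
    ∑ k ∈ range (m + 1), (-1 : ℝ) ^ k * (m.choose k) * (k : ℝ) ^ i = 0 := by
  intro i
  induction i using Nat.strong_induction_on with
  | _ i IH =>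
    intro m him
    match i with
    | 0 =>
      have h := add_pow (-1 : ℝ) 1 m
      simp only [one_pow, mul_one, neg_add_cancel] at h
      rw [zero_pow (by omega : m ≠ 0)] at h
      simpa using h.symm
    | i + 1 =>
      obtain ⟨m', rfl⟩ : ∃ m', m = m' + 1 := ⟨m - 1, by omega⟩
      rw [Finset.sum_range_succ']
      have hz : ((0 : ℕ) : ℝ) ^ (i + 1) = 0 := by
        simp
      rw [hz, mul_zero, add_zero]
      have hterm : ∀ k : ℕ, (-1 : ℝ) ^ (k + 1) * ((m' + 1).choose (k + 1)) * (((k + 1 : ℕ)) : ℝ) ^ (i + 1)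
          = ∑ t ∈ range (i + 1), (-(m' + 1 : ℝ) * (i.choose t)) *
              ((-1 : ℝ) ^ k * (m'.choose k) * (k : ℝ) ^ t) := by
        intro k
        have hc : ((m' + 1 : ℕ) : ℝ) * (m'.choose k) = (((m' + 1).choose (k + 1) : ℕ) : ℝ) * ((k : ℝ) + 1) := by
          exact_mod_cast congrArg (Nat.cast (R := ℝ)) (Nat.add_one_mul_choose_eq m' k)
        have hp : ((k : ℝ) + 1) ^ i = ∑ t ∈ range (i + 1), (k : ℝ) ^ t * (i.choose t) := by
          simpa using add_pow (k : ℝ) 1 i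
        have h1 : (-1 : ℝ) ^ (k + 1) * ((m' + 1).choose (k + 1)) * (((k + 1 : ℕ)) : ℝ) ^ (i + 1)
            = -(m' + 1 : ℝ) * ((-1 : ℝ) ^ k * (m'.choose k)) * ((k : ℝ) + 1) ^ i := by
          push_cast at hc ⊢
          linear_combination (-(-1 : ℝ) ^ (k + 1) * ((k : ℝ) + 1) ^ i) * hc
        rw [h1, hp, Finset.mul_sum]
        exact Finset.sum_congr rfl fun t _ => by ring
      calc ∑ k ∈ range (m' + 1), (-1 : ℝ) ^ (k + 1) * ((m' + 1).choose (k + 1)) * (((k + 1 : ℕ)) : ℝ) ^ (i + 1)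
          = ∑ k ∈ range (m' + 1), ∑ t ∈ range (i + 1), (-(m' + 1 : ℝ) * (i.choose t)) *
              ((-1 : ℝ) ^ k * (m'.choose k) * (k : ℝ) ^ t) := Finset.sum_congr rfl fun k _ => hterm k
        _ = ∑ t ∈ range (i + 1), (-(m' + 1 : ℝ) * (i.choose t)) *
              ∑ k ∈ range (m' + 1), ((-1 : ℝ) ^ k * (m'.choose k) * (k : ℝ) ^ t) := by
            rw [Finset.sum_comm]
            exact Finset.sum_congr rfl fun t _ => (Finset.mul_sum _ _ _).symm
        _ = 0 := by
            apply Finset.sum_eq_zero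
            intro t ht
            simp only [Finset.mem_range] at ht
            rw [IH t (by omega) m' (by omega), mul_zero]

lemma diff_vanish (j m : ℕ) (hm : j < m) (c : ℝ) :
    ∑ k ∈ range (m + 1), (-1 : ℝ) ^ k * (m.choose k) * (c + k) ^ j = 0 := by
  have hterm : ∀ k : ℕ, (-1 : ℝ) ^ k * (m.choose k) * (c + k) ^ j
      = ∑ t ∈ range (j + 1), (c ^ t * (j.choose t)) *
          ((-1 : ℝ) ^ k * (m.choose k) * (k : ℝ) ^ (j - t)) := by
    intro k
    have hp : (c + (k : ℝ)) ^ j = ∑ t ∈ range (j + 1), c ^ t * (k : ℝ) ^ (j - t) * (j.choose t) :=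
      add_pow c (k : ℝ) j
    rw [hp, Finset.mul_sum]
    exact Finset.sum_congr rfl fun t _ => by ring
  calc ∑ k ∈ range (m + 1), (-1 : ℝ) ^ k * (m.choose k) * (c + k) ^ j
      = ∑ k ∈ range (m + 1), ∑ t ∈ range (j + 1), (c ^ t * (j.choose t)) *
          ((-1 : ℝ) ^ k * (m.choose k) * (k : ℝ) ^ (j - t)) := Finset.sum_congr rfl fun k _ => hterm k
    _ = ∑ t ∈ range (j + 1), (c ^ t * (j.choose t)) *
          ∑ k ∈ range (m + 1), ((-1 : ℝ) ^ k * (m.choose k) * (k : ℝ) ^ (j - t)) := by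
        rw [Finset.sum_comm]
        exact Finset.sum_congr rfl fun t _ => (Finset.mul_sum _ _ _).symm
    _ = 0 := by
        apply Finset.sum_eq_zero
        intro t ht
        rw [alt_pow_sum (j - t) m (by omega), mul_zero]

theorem abelA : ∀ (n : ℕ) (x y : ℝ),
    (y + n) ^ n + ∑ k ∈ Icc 1 n, (n.choose k : ℝ) * x * (x + k) ^ (k - 1) * (y + n - k) ^ (n - k)
      = (x + y + n) ^ n := by
  intro n
  induction n with
  | zero => intro x y; simp
  | succ n IH =>
    intro x y
    set f : ℝ → ℝ := fun z => (z + ((n : ℝ) + 1)) ^ (n + 1) +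
      ∑ k ∈ Icc 1 (n + 1), ((n + 1).choose k : ℝ) * x * (x + k) ^ (k - 1) *
        (z + (((n : ℝ) + 1) - k)) ^ ((n + 1) - k) with hf
    set g : ℝ → ℝ := fun z => (x + z + ((n : ℝ) + 1)) ^ (n + 1) with hg
    -- derivatives
    have hfd : ∀ z : ℝ, HasDerivAt f
        ((((n + 1 : ℕ)) : ℝ) * (z + ((n : ℝ) + 1)) ^ n +
          ∑ k ∈ Icc 1 (n + 1), ((n + 1).choose k : ℝ) * x * (x + k) ^ (k - 1) *
            (((((n + 1) - k : ℕ)) : ℝ) * (z + (((n : ℝ) + 1) - k)) ^ ((n + 1) - k - 1))) z := by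
      intro z
      apply HasDerivAt.add
      · have h := (((hasDerivAt_id z).add_const ((n : ℝ) + 1)).pow (n + 1))
        simp only [id_eq, mul_one, Nat.add_sub_cancel] at h
        exact_mod_cast h
      · apply HasDerivAt.fun_sum
        intro k _
        have h := (((hasDerivAt_id z).add_const (((n : ℝ) + 1) - k)).pow ((n + 1) - k)).const_mul
          (((n + 1).choose k : ℝ) * x * (x + k) ^ (k - 1))
        simp only [id_eq, mul_one] at h
        exact h
    have hgd : ∀ z : ℝ, HasDerivAt g ((((n + 1 : ℕ)) : ℝ) * (x + z + ((n : ℝ) + 1)) ^ n) z := by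
      intro z
      have h := ((((hasDerivAt_id z).const_add x).add_const ((n : ℝ) + 1)).pow (n + 1))
      simp only [id_eq, mul_one, Nat.add_sub_cancel] at h
      rw [hg]
      exact_mod_cast h
    -- derivatives agree
    have hderiv_eq : ∀ z : ℝ, ((((n + 1 : ℕ)) : ℝ) * (z + ((n : ℝ) + 1)) ^ n +
          ∑ k ∈ Icc 1 (n + 1), ((n + 1).choose k : ℝ) * x * (x + k) ^ (k - 1) *
            (((((n + 1) - k : ℕ)) : ℝ) * (z + (((n : ℝ) + 1) - k)) ^ ((n + 1) - k - 1)))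
        = (((n + 1 : ℕ)) : ℝ) * (x + z + ((n : ℝ) + 1)) ^ n := by
      intro z
      have hsum : ∑ k ∈ Icc 1 (n + 1), ((n + 1).choose k : ℝ) * x * (x + k) ^ (k - 1) *
            (((((n + 1) - k : ℕ)) : ℝ) * (z + (((n : ℝ) + 1) - k)) ^ ((n + 1) - k - 1))
          = (((n + 1 : ℕ)) : ℝ) * ∑ k ∈ Icc 1 n, (n.choose k : ℝ) * x * (x + k) ^ (k - 1) *
            (z + 1 + (n : ℝ) - k) ^ (n - k) := by
        rw [Finset.sum_Icc_succ_top (by omega : 1 ≤ n + 1), Finset.mul_sum]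
        simp only [Nat.sub_self, Nat.cast_zero, zero_mul, mul_zero, add_zero]
        apply Finset.sum_congr rfl
        intro k hk
        simp only [Finset.mem_Icc] at hk
        have hcc : (n.choose k : ℝ) * (((n + 1 : ℕ)) : ℝ)
            = ((n + 1).choose k : ℝ) * (((n + 1 - k : ℕ)) : ℝ) := by
          exact_mod_cast congrArg (Nat.cast (R := ℝ)) (Nat.choose_mul_succ_eq n k)
        have he : (n + 1) - k - 1 = n - k := by omega
        have hb : (z + (((n : ℝ) + 1) - k)) = (z + 1 + (n : ℝ) - k) := by ring
        rw [he, hb]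
        linear_combination (x * (x + (k : ℝ)) ^ (k - 1) * (z + 1 + (n : ℝ) - k) ^ (n - k)) * hcc.symm
      rw [hsum]
      have hIH := IH x (z + 1)
      have hb2 : (z + ((n : ℝ) + 1)) = (z + 1 + (n : ℝ)) := by ring
      rw [hb2, ← mul_add, hIH]
      have hb3 : (x + (z + 1) + (n : ℝ)) = (x + z + ((n : ℝ) + 1)) := by ring
      rw [hb3]
    -- f - g constant
    have hconst : ∀ z w : ℝ, f z - g z = f w - g w := by
      have hd : Differentiable ℝ (fun z => f z - g z) :=
        fun z => ((hfd z).sub (hgd z)).differentiableAt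
      have hd0 : ∀ z, deriv (fun z => f z - g z) z = 0 := by
        intro z
        rw [(show HasDerivAt (fun z => f z - g z) _ z from (hfd z).sub (hgd z)).deriv, hderiv_eq z, sub_self]
      exact fun z w => is_const_of_deriv_eq_zero hd hd0 z w
    -- value at y₀
    set y₀ : ℝ := -(x + ((n : ℝ) + 1)) with hy₀
    have hy0 : f y₀ - g y₀ = 0 := by
      have hgy : g y₀ = 0 := by
        simp only [hg, hy₀]
        rw [show x + -(x + ((n : ℝ) + 1)) + ((n : ℝ) + 1) = 0 by ring]
        exact zero_pow (by omega)
      have hfy : f y₀ = 0 := by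
        simp only [hf, hy₀]
        have h0 := diff_vanish n (n + 1) (by omega) x
        have hicc : ∑ k ∈ range (n + 1 + 1), (-1 : ℝ) ^ k * ((n + 1).choose k) * (x + k) ^ n
            = (x : ℝ) ^ n + ∑ k ∈ Icc 1 (n + 1), (-1 : ℝ) ^ k * ((n + 1).choose k) * (x + k) ^ n := by
          rw [Finset.sum_range_succ']
          have h1 : ∑ k ∈ Icc 1 (n + 1), (-1 : ℝ) ^ k * ((n + 1).choose k) * (x + k) ^ n
              = ∑ k ∈ range (n + 1), (-1 : ℝ) ^ (1 + k) * ((n + 1).choose (1 + k)) * (x + (1 + k : ℕ)) ^ n := by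
            rw [← Finset.Ico_add_one_right_eq_Icc, Finset.sum_Ico_eq_sum_range]
            norm_num
          rw [h1]
          simp only [Nat.cast_zero, add_zero, pow_zero, Nat.choose_zero_right, Nat.cast_one,
            one_mul, mul_one]
          rw [add_comm]
          congr 1
          exact Finset.sum_congr rfl fun k _ => by rw [Nat.add_comm 1 k]
        have key0 : (x : ℝ) ^ n + ∑ k ∈ Icc 1 (n + 1), (-1 : ℝ) ^ k * ((n + 1).choose k) * (x + k) ^ n = 0 := by
          rw [← hicc]; exact h0
        have hsign : ∀ k, k ≤ n + 1 → (-1 : ℝ) ^ (n + 1 - k) = (-1 : ℝ) ^ (n + 1) * (-1 : ℝ) ^ k := by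
          intro k hk
          have hnk : n + 1 = (n + 1 - k) + k := by omega
          have h2 : ((-1 : ℝ) ^ k) * ((-1 : ℝ) ^ k) = 1 := by
            rw [← pow_add, ← two_mul, pow_mul]; norm_num
          calc (-1 : ℝ) ^ (n + 1 - k) = (-1 : ℝ) ^ (n + 1 - k) * (((-1 : ℝ) ^ k) * ((-1 : ℝ) ^ k)) := by
                rw [h2, mul_one]
            _ = ((-1 : ℝ) ^ ((n + 1 - k) + k)) * (-1 : ℝ) ^ k := by rw [pow_add]; ring
            _ = (-1 : ℝ) ^ (n + 1) * (-1 : ℝ) ^ k := by rw [← hnk]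
        calc (-(x + ((n : ℝ) + 1)) + ((n : ℝ) + 1)) ^ (n + 1) +
              ∑ k ∈ Icc 1 (n + 1), ((n + 1).choose k : ℝ) * x * (x + k) ^ (k - 1) *
                (-(x + ((n : ℝ) + 1)) + (((n : ℝ) + 1) - k)) ^ ((n + 1) - k)
            = ((-1 : ℝ) ^ (n + 1) * x) * ((x : ℝ) ^ n +
                ∑ k ∈ Icc 1 (n + 1), (-1 : ℝ) ^ k * ((n + 1).choose k) * (x + k) ^ n) := by
              rw [mul_add, Finset.mul_sum]
              congr 1
              · rw [show (-(x + ((n : ℝ) + 1)) + ((n : ℝ) + 1)) = -x by ring, neg_pow, pow_succ]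
                ring
              · apply Finset.sum_congr rfl
                intro k hk
                simp only [Finset.mem_Icc] at hk
                rw [show (-(x + ((n : ℝ) + 1)) + (((n : ℝ) + 1) - k)) = -(x + k) by ring]
                rw [neg_pow, hsign k hk.2]
                have e2 : (x + (k : ℝ)) ^ (k - 1) * (x + (k : ℝ)) ^ ((n + 1) - k) = (x + (k : ℝ)) ^ n := by
                  rw [← pow_add]; congr 1; omega
                rw [← e2]
                ring
          _ = 0 := by rw [key0, mul_zero]
      rw [hfy, hgy, sub_zero]
    have h2 := hconst y y₀
    rw [hy0] at h2
    have hfg : f y = g y := sub_eq_zero.mp h2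
    have hfg' : (y + ((n : ℝ) + 1)) ^ (n + 1) +
        ∑ k ∈ Icc 1 (n + 1), ((n + 1).choose k : ℝ) * x * (x + k) ^ (k - 1) *
          (y + (((n : ℝ) + 1) - k)) ^ ((n + 1) - k) = (x + y + ((n : ℝ) + 1)) ^ (n + 1) := hfg
    push_cast
    rw [← hfg']
    congr 1
    apply Finset.sum_congr rfl
    intro k _
    rw [show (y + ((n : ℝ) + 1) - k) = (y + (((n : ℝ) + 1) - k)) by ring]

lemma keyL (n : ℕ) (y : ℝ) :
    ∑ m ∈ range n, (n.choose m : ℝ) * ((m : ℝ) + 1) ^ m * y * (y + n - m) ^ (n - 1 - m)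
      = (y + 1 + n) ^ n - (1 + n) ^ n := by
  have h := abelA n y 1
  have h1 : ∑ k ∈ Icc 1 n, (n.choose k : ℝ) * y * (y + k) ^ (k - 1) * (1 + (n : ℝ) - k) ^ (n - k)
      = ∑ m ∈ range n, (n.choose m : ℝ) * ((m : ℝ) + 1) ^ m * y * (y + n - m) ^ (n - 1 - m) := by
    rw [← Finset.Ico_add_one_right_eq_Icc, Finset.sum_Ico_eq_sum_range]
    norm_num
    rw [← Finset.sum_range_reflect]
    apply Finset.sum_congr rfl
    intro m hm
    simp only [Finset.mem_range] at hm
    rw [show 1 + (n - 1 - m) = n - m by omega]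
    rw [show (n.choose (n - m) : ℝ) = (n.choose m : ℝ) by rw [Nat.choose_symm (by omega)]]
    rw [show ((n - 1 - m : ℕ) : ℝ) = (n : ℝ) - 1 - m from by
      rw [Nat.cast_sub (by omega), Nat.cast_sub (by omega), Nat.cast_one]]
    rw [show n - (n - m) = m by omega]
    rw [show y + (1 + ((n : ℝ) - 1 - m)) = y + (n : ℝ) - m by ring]
    rw [show (n : ℝ) - ((n : ℝ) - 1 - m) = (m : ℝ) + 1 by ring]
    ring
  rw [h1] at h
  linarith [h]

theorem abelian_expectation (N : ℕ) (hN : 1 ≤ N) (α : ℝ) (hα0 : 0 < α) (hα1 : α < 1) :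
    ∑ L ∈ Finset.Icc 1 N,
      (L : ℝ) * ((1 - α) / (N - (N - 1) * α)) * (N.choose L) *
        (L * α / N) ^ (L - 1) * (1 - L * α / N) ^ ((N : ℤ) - L - 1) =
      N / (N - (N - 1) * α) := by
  obtain ⟨n, rfl⟩ : ∃ n, N = n + 1 := ⟨N - 1, by omega⟩
  push_cast
  have hnn : (0:ℝ) ≤ (n:ℝ) := Nat.cast_nonneg n
  have hNne : ((n:ℝ) + 1) ≠ 0 := by positivity
  have ha : α ≠ 0 := ne_of_gt hα0
  have h1apos : (0:ℝ) < 1 - α := by linarith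
  have h1a : (1:ℝ) - α ≠ 0 := ne_of_gt h1apos
  have hDpos : (0:ℝ) < (n:ℝ) + 1 - ((n:ℝ) + 1 - 1) * α := by nlinarith [mul_nonneg hnn (le_of_lt h1apos)]
  have hD : ((n:ℝ) + 1 - ((n:ℝ) + 1 - 1) * α) ≠ 0 := ne_of_gt hDpos
  set xx : ℝ := α / ((n:ℝ) + 1) with hx
  set yy : ℝ := ((n:ℝ) + 1) * (1 - α) / α with hy
  set SS : ℝ := ∑ m ∈ range n, (n.choose m : ℝ) * ((m : ℝ) + 1) ^ m * (yy + n - m) ^ (n - 1 - m) with hS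
  set T : ℝ := ∑ L ∈ Icc 1 (n + 1), ((L:ℝ) * (((n+1).choose L : ℕ) : ℝ) *
      ((L:ℝ) * α / ((n:ℝ) + 1)) ^ (L - 1) *
      (1 - (L:ℝ) * α / ((n:ℝ) + 1)) ^ ((n:ℤ) + 1 - (L:ℤ) - 1)) with hTdef
  have hyne : yy ≠ 0 := by rw [hy]; positivity
  -- y * S via keyL
  have hyS : yy * SS = (((n:ℝ) + 1) / α) ^ n - ((n:ℝ) + 1) ^ n := by
    have hk := keyL n yy
    have h2 : ∑ m ∈ range n, (n.choose m : ℝ) * ((m : ℝ) + 1) ^ m * yy * (yy + n - m) ^ (n - 1 - m)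
        = yy * SS := by
      rw [hS, Finset.mul_sum]
      exact Finset.sum_congr rfl fun m _ => by ring
    rw [h2] at hk
    rw [hk, show yy + 1 + (n:ℝ) = ((n:ℝ) + 1) / α by rw [hy]; field_simp; ring,
      show (1 + (n:ℝ)) = (n:ℝ) + 1 by ring]
  -- closed form for the bulk term
  have hS2 : ((n:ℝ) + 1) * xx ^ (n - 1) * SS = ((n:ℝ) + 1) * (1 - α ^ n) / (1 - α) := by
    by_cases hn0 : n = 0
    · subst hn0; rw [hS]; simp
    · have hSval : SS = ((((n:ℝ) + 1) / α) ^ n - ((n:ℝ) + 1) ^ n) / yy := by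
        rw [eq_div_iff hyne]; linear_combination hyS
      rw [hSval, hx, hy]
      obtain ⟨e, rfl⟩ : ∃ e, n = e + 1 := ⟨n - 1, by omega⟩
      simp only [Nat.add_sub_cancel]
      push_cast
      simp only [div_pow]
      field_simp
      ring
  -- the top term
  have htop : ((n+1:ℕ):ℝ) * ((((n+1).choose (n+1) : ℕ)):ℝ) *
      (((n+1:ℕ):ℝ) * α / ((n:ℝ) + 1)) ^ ((n+1) - 1) *
      (1 - ((n+1:ℕ):ℝ) * α / ((n:ℝ) + 1)) ^ ((n:ℤ) + 1 - ((n+1:ℕ):ℤ) - 1)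
      = ((n:ℝ) + 1) * α ^ n * (1 - α)⁻¹ := by
    rw [Nat.choose_self]
    rw [show ((n:ℤ) + 1 - ((n+1:ℕ):ℤ) - 1) = -1 by push_cast; ring]
    rw [show (((n+1:ℕ):ℝ) * α / ((n:ℝ) + 1)) = α by push_cast; field_simp]
    rw [show ((n+1) - 1) = n from rfl, zpow_neg_one]
    push_cast
    rw [show (1:ℝ) - α = 1 - α from rfl]
    ring
  -- per-term identity for L = 1 + m
  have hterm : ∀ m, m < n →
      ((1+m:ℕ):ℝ) * ((((n+1).choose (1+m) : ℕ)):ℝ) *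
        (((1+m:ℕ):ℝ) * α / ((n:ℝ) + 1)) ^ ((1+m) - 1) *
        (1 - ((1+m:ℕ):ℝ) * α / ((n:ℝ) + 1)) ^ ((n:ℤ) + 1 - ((1+m:ℕ):ℤ) - 1)
      = ((n:ℝ) + 1) * xx ^ (n - 1) * ((n.choose m : ℝ) * ((m : ℝ) + 1) ^ m * (yy + n - m) ^ (n - 1 - m)) := by
    intro m hm
    have hch : ((1+m:ℕ):ℝ) * (((n+1).choose (1+m) : ℕ) : ℝ) = ((n:ℝ) + 1) * (n.choose m : ℝ) := by
      have h3 := congrArg (Nat.cast (R := ℝ)) (Nat.add_one_mul_choose_eq n m)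
      push_cast at h3 ⊢
      rw [show 1 + m = m + 1 by omega]
      linear_combination -h3
    have hxb : ((1+m:ℕ):ℝ) * α / ((n:ℝ) + 1) = ((m:ℝ) + 1) * xx := by
      rw [hx]; push_cast; ring
    have hbase : 1 - ((m:ℝ) + 1) * xx = xx * (yy + n - m) := by
      rw [hx, hy]; push_cast; field_simp; ring
    have hez : ((n:ℤ) + 1 - ((1+m:ℕ):ℤ) - 1) = ((n - 1 - m : ℕ) : ℤ) := by push_cast; omega
    rw [hez, zpow_natCast, show (1+m) - 1 = m by omega, hxb, hbase, mul_pow, mul_pow]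
    have ex : xx ^ m * xx ^ (n - 1 - m) = xx ^ (n - 1) := by
      rw [← pow_add]; congr 1; omega
    rw [← ex, hch]
    ring
  -- compute T
  have hT : T = ((n:ℝ) + 1) / (1 - α) := by
    rw [hTdef, Finset.sum_Icc_succ_top (by omega : 1 ≤ n + 1)]
    have hre : ∑ L ∈ Icc 1 n, ((L:ℝ) * (((n+1).choose L : ℕ) : ℝ) *
        ((L:ℝ) * α / ((n:ℝ) + 1)) ^ (L - 1) *
        (1 - (L:ℝ) * α / ((n:ℝ) + 1)) ^ ((n:ℤ) + 1 - (L:ℤ) - 1))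
        = ((n:ℝ) + 1) * xx ^ (n - 1) * SS := by
      rw [← Finset.Ico_add_one_right_eq_Icc, Finset.sum_Ico_eq_sum_range, hS, Finset.mul_sum]
      rw [show n + 1 - 1 = n from rfl]
      apply Finset.sum_congr rfl
      intro m hm
      simp only [Finset.mem_range] at hm
      exact_mod_cast hterm m hm
    rw [hre]
    have htop2 := htop
    push_cast at htop2 ⊢
    rw [htop2, hS2]
    field_simp
    ring
  calc ∑ L ∈ Finset.Icc 1 (n + 1),
      (L : ℝ) * ((1 - α) / ((n:ℝ) + 1 - ((n:ℝ) + 1 - 1) * α)) * (((n+1).choose L : ℕ) : ℝ) *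
        ((L:ℝ) * α / ((n:ℝ) + 1)) ^ (L - 1) * (1 - (L:ℝ) * α / ((n:ℝ) + 1)) ^ ((n:ℤ) + 1 - (L:ℤ) - 1)
      = ((1 - α) / ((n:ℝ) + 1 - ((n:ℝ) + 1 - 1) * α)) * T := by
        rw [hTdef, Finset.mul_sum]
        exact Finset.sum_congr rfl fun L _ => by ring
    _ = ((n:ℝ) + 1) / ((n:ℝ) + 1 - ((n:ℝ) + 1 - 1) * α) := by
        rw [hT, div_mul_div_comm, mul_comm ((1:ℝ) - α) ((n:ℝ) + 1),
          mul_div_mul_right _ _ h1a]
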